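/- Let (Ω,Σ,Pr) be a probability space, A_i ∈ Σ for i ∈ ℕ, with Pr(limsup A_i) = 0. Define T_j := Σ_{|U|=j} Pr(B_U), where B_U is the event that exactly the A_i with i ∈ U occur. Then for every k ∈ ℕ one has, as an identity in [0,∞], S_k = Σ_{j=0}^∞ C(j+k, k) T_{j+k}, where S_k := Σ_{1≤i₁<…<i_k} Pr(A_{i₁}∩…∩A_{i_k}); in particular S_k is finite if and only if the series on the right converges. -/

import Mathlib

open MeasureTheory Filter ENNReal

noncomputable def S {Ω : Type*} [MeasurableSpace Ω] (μ : Measure Ω) (A : ℕ → Set Ω) (k : ℕ) :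
    ℝ≥0∞ :=
  ∑' s : {s : Finset ℕ // s.card = k}, μ (⋂ i ∈ (s : Finset ℕ), A i)

def B {Ω : Type*} (A : ℕ → Set Ω) (U : Finset ℕ) : Set Ω :=
  (⋂ i ∈ U, A i) \ ⋃ i ∈ {i : ℕ | i ∉ U}, A i

noncomputable def T {Ω : Type*} [MeasurableSpace Ω] (μ : Measure Ω) (A : ℕ → Set Ω) (j : ℕ) :
    ℝ≥0∞ :=
  ∑' U : {U : Finset ℕ // U.card = j}, μ (B A (U : Finset ℕ))

lemma mem_B_iff {Ω : Type*} {A : ℕ → Set Ω} {U : Finset ℕ} {ω : Ω} :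
    ω ∈ B A U ↔ ∀ i, i ∈ U ↔ ω ∈ A i := by
  simp only [B, Set.mem_diff, Set.mem_iInter, Set.mem_iUnion, Set.mem_setOf_eq]
  constructor
  · rintro ⟨h1, h2⟩ i
    refine ⟨h1 i, fun hω => ?_⟩
    by_contra h
    exact h2 ⟨i, h, hω⟩
  · intro h
    exact ⟨fun i hi => (h i).1 hi, fun ⟨i, hi, hω⟩ => hi ((h i).2 hω)⟩

lemma measurable_B {Ω : Type*} [MeasurableSpace Ω] {A : ℕ → Set Ω}
    (hA : ∀ i, MeasurableSet (A i)) (U : Finset ℕ) : MeasurableSet (B A U) :=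
  (MeasurableSet.biInter U.countable_toSet fun i _ => hA i).diff
    (MeasurableSet.biUnion (Set.to_countable _) fun i _ => hA i)

lemma disjoint_B {Ω : Type*} {A : ℕ → Set Ω} {U V : Finset ℕ} (hUV : U ≠ V) :
    Disjoint (B A U) (B A V) := by
  rw [Set.disjoint_left]
  intro ω hU hV
  apply hUV
  ext i
  rw [mem_B_iff] at hU hV
  rw [hU i, hV i]

lemma key {Ω : Type*} [MeasurableSpace Ω] {A : ℕ → Set Ω} (μ : Measure Ω)
    (hA : ∀ i, MeasurableSet (A i))
    (hinf : μ (⋂ n, ⋃ i, ⋃ _ : n ≤ i, A i) = 0) (s : Finset ℕ) :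
    μ (⋂ i ∈ s, A i) = ∑' U : {U : Finset ℕ // s ⊆ U}, μ (B A (U : Finset ℕ)) := by
  rw [← measure_iUnion (fun U V hUV => disjoint_B (fun h => hUV (Subtype.ext h)))
      (fun U => measurable_B hA _)]
  rw [← measure_diff_null hinf]
  congr 1
  ext ω
  simp only [Set.mem_diff, Set.mem_iInter, Set.mem_iUnion, not_exists, not_forall,
    Set.mem_setOf_eq]
  constructor
  · rintro ⟨h1, n, h2⟩
    have hfin : Set.Finite {i | ω ∈ A i} := by
      apply Set.Finite.subset (Finset.range n).finite_toSet
      intro i hi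
      simp only [Finset.coe_range, Set.mem_Iio]
      by_contra h
      exact h2 i (le_of_not_gt h) hi
    refine ⟨⟨hfin.toFinset, fun i hi => hfin.mem_toFinset.2 (h1 i hi)⟩, ?_⟩
    rw [mem_B_iff]
    intro i
    exact hfin.mem_toFinset
  · rintro ⟨⟨U, hsU⟩, hω⟩
    rw [mem_B_iff] at hω
    refine ⟨fun i hi => (hω i).1 (hsU hi), U.sup id + 1, fun i hi => ?_⟩
    intro hωi
    have : i ∈ U := (hω i).2 hωi
    have := Finset.le_sup (f := id) this
    simp only [id_eq] at this
    omega

lemma shift (g : ℕ → ℝ≥0∞) (k : ℕ) (h : ∀ j < k, g j = 0) :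
    ∑' j, g j = ∑' j, g (j + k) := by
  rw [← Summable.sum_add_tsum_nat_add' (f := g) (k := k) ENNReal.summable,
    Finset.sum_eq_zero (fun j hj => h j (Finset.mem_range.1 hj)), zero_add]

theorem stmt9 {Ω : Type*} [MeasurableSpace Ω] (μ : Measure Ω) [IsProbabilityMeasure μ]
    (A : ℕ → Set Ω) (hA : ∀ i, MeasurableSet (A i))
    (hinf : μ (⋂ n, ⋃ i, ⋃ _ : n ≤ i, A i) = 0) (k : ℕ) (hk : 1 ≤ k) :
    S μ A k = ∑' j : ℕ, (Nat.choose (j + k) k : ℝ≥0∞) * T μ A (j + k) := by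
  set F : Finset ℕ → Finset ℕ → ℝ≥0∞ :=
    fun s U => if s.card = k ∧ s ⊆ U then μ (B A U) else 0 with hF
  have e1 : ∀ s : {s : Finset ℕ // s.card = k},
      μ (⋂ i ∈ (s : Finset ℕ), A i) = ∑' U : Finset ℕ, F (s : Finset ℕ) U := by
    intro s
    refine (key μ hA hinf s).trans ?_
    refine Eq.trans (tsum_subtype {U : Finset ℕ | (s : Finset ℕ) ⊆ U}
      (fun U => μ (B A U))) ?_
    refine tsum_congr fun U => ?_
    simp only [Set.indicator_apply, Set.mem_setOf_eq, hF, s.2, true_and]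
  have step1 : S μ A k = ∑' s : Finset ℕ, ∑' U : Finset ℕ, F s U := by
    rw [S, tsum_congr e1]
    refine Eq.trans (tsum_subtype {s : Finset ℕ | s.card = k}
      (fun s => ∑' U : Finset ℕ, F s U)) ?_
    refine tsum_congr fun s => ?_
    rw [Set.indicator_apply]
    split_ifs with hs
    · rfl
    · symm
      refine (Summable.tsum_eq_zero_iff ENNReal.summable).2 fun U => ?_
      simp only [hF]
      rw [if_neg (fun h => hs h.1)]
  have step2 : ∀ U : Finset ℕ, ∑' s : Finset ℕ, F s U
      = (Nat.choose U.card k : ℝ≥0∞) * μ (B A U) := by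
    intro U
    rw [tsum_eq_sum (s := U.powersetCard k) (f := fun s => F s U)
      (fun s hs => by
        simp only [hF]
        rw [if_neg]
        intro ⟨h1, h2⟩
        exact hs (Finset.mem_powersetCard.2 ⟨h2, h1⟩))]
    rw [Finset.sum_congr rfl (fun s hs => by
      simp only [hF]
      rw [if_pos]
      obtain ⟨h2, h1⟩ := Finset.mem_powersetCard.1 hs
      exact ⟨h1, h2⟩)]
    rw [Finset.sum_const, Finset.card_powersetCard, nsmul_eq_mul]
  have step3 : S μ A k = ∑' U : Finset ℕ, (Nat.choose U.card k : ℝ≥0∞) * μ (B A U) := by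
    rw [step1, ENNReal.tsum_comm]
    exact tsum_congr step2
  have step4 : S μ A k = ∑' j : ℕ, (Nat.choose j k : ℝ≥0∞) * T μ A j := by
    rw [step3, ← (Equiv.sigmaFiberEquiv (Finset.card (α := ℕ))).tsum_eq, ENNReal.tsum_sigma']
    refine tsum_congr fun j => ?_
    rw [T, ← ENNReal.tsum_mul_left]
    refine tsum_congr fun U => ?_
    simp [Equiv.sigmaFiberEquiv, U.2]
  rw [step4]
  exact shift (fun j => (Nat.choose j k : ℝ≥0∞) * T μ A j) k
    (fun j hj => by simp [Nat.choose_eq_zero_of_lt hj])
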